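/- The set of all pairs (a,b) ∈ ℂ² satisfying the five equations (E1)–(E5) is exactly {(2,2), (−1,1)} ∪ {(a, 2a−2) : a ∈ ℂ, a² − 3a + 1 = 0} ∪ {(a, 2) : a ∈ ℂ, a² + a − 1 = 0}, a set of six points. -/
import Mathlib


/-- The five defining equations (E1)–(E5) of the fundamental algebraic set
`F₂(T₄,₅)` in the coordinates `(a, b) = (x₁₂, x₁₃)`. -/
def F2Eqns (a b : ℂ) : Prop :=
  a ^ 5 - 4 * a ^ 3 * b + 3 * a ^ 3 + 3 * a * b ^ 2 - 2 * a * b - 3 * a = 2 ∧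
  a ^ 6 - 4 * a ^ 4 * b + 2 * a ^ 4 + 3 * a ^ 2 * b ^ 2 + a ^ 2 * b - 5 * a ^ 2
    - b ^ 2 + 2 = a ∧
  a ^ 4 * b - a ^ 4 - 3 * a ^ 2 * b ^ 2 + 4 * a ^ 2 * b + b ^ 3 - 3 * b = a ∧
  a ^ 5 * b - a ^ 5 - 4 * a ^ 3 * b ^ 2 + 6 * a ^ 3 * b + 3 * a * b ^ 3 - a ^ 3
    - 3 * a * b ^ 2 - 5 * a * b + 3 * a = b ∧
  a ^ 5 - 3 * a ^ 3 * b + a ^ 3 + a * b ^ 2 + 2 * a * b - 3 * a = b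

lemma F2_fwd {a b : ℂ} (h : F2Eqns a b) :
    (a = 2 ∧ b = 2) ∨ (a = -1 ∧ b = 1) ∨
    (a ^ 2 - 3 * a + 1 = 0 ∧ b = 2 * a - 2) ∨ (a ^ 2 + a - 1 = 0 ∧ b = 2) := by
  obtain ⟨h1, h2, h3, h4, h5⟩ := h
  have hfac : (b - 2) * (2 * a * b - a ^ 3 + 1) = 0 := by linear_combination h1 - h5
  rcases mul_eq_zero.mp hfac with hb | hc
  · -- b = 2
    have hb2 : b = 2 := by linear_combination hb
    subst hb2
    have h5' : (a - 2) * (a ^ 2 + a - 1) ^ 2 = 0 := by linear_combination h5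
    rcases mul_eq_zero.mp h5' with ha | hq
    · exact Or.inl ⟨by linear_combination ha, rfl⟩
    · exact Or.inr (Or.inr (Or.inr ⟨pow_eq_zero_iff (by norm_num) |>.mp hq, rfl⟩))
  · -- 2ab - a^3 + 1 = 0
    have hg : (a + 1) * (a ^ 2 - 3 * a + 1) = 0 := by
      linear_combination (-2*a^6 - 4*a^5 + 6*a^4 + 8*a^3 - 4*a^2) * h1 +
        (2*a^5 + 4*a^4 - 4*a^3 - 4*a^2) * h2 +
        (-2*a^4*b - 4*a^3*b + 4*a^2*b - 2*a*b + 2*a^4 + 10*a^3 - 2*a^2 - 2*a + 1) * hc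
    rcases mul_eq_zero.mp hg with ha | hq
    · have ha' : a = -1 := by linear_combination ha
      refine Or.inr (Or.inl ⟨ha', ?_⟩)
      subst ha'
      linear_combination (-1/2 : ℂ) * hc
    · have hane : a ≠ 0 := by
        intro h0; rw [h0] at hq; norm_num at hq
      have hkey : 2 * a * (b - (2 * a - 2)) = 0 := by
        linear_combination hc + (a - 1) * hq
      rcases mul_eq_zero.mp hkey with h0 | hb
      · rcases mul_eq_zero.mp h0 with h | h
        · norm_num at h
        · exact absurd h hane
      · exact Or.inr (Or.inr (Or.inl ⟨hq, by linear_combination hb⟩))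

lemma F2_bwd_q1 {a : ℂ} (hq : a ^ 2 - 3 * a + 1 = 0) : F2Eqns a (2 * a - 2) := by
  refine ⟨?_, ?_, ?_, ?_, ?_⟩
  · linear_combination (a^3 - 5*a^2 + 7*a - 2) * hq
  · linear_combination (a^4 - 5*a^3 + 6*a^2 + a - 2) * hq
  · linear_combination (2*a^3 - 9*a^2 + 11*a - 2) * hq
  · linear_combination (2*a^4 - 13*a^3 + 27*a^2 - 19*a + 2) * hq
  · linear_combination (a^3 - 3*a^2 + a + 2) * hq

lemma F2_bwd_q2 {a : ℂ} (hq : a ^ 2 + a - 1 = 0) : F2Eqns a 2 := by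
  refine ⟨?_, ?_, ?_, ?_, ?_⟩
  · linear_combination (a^3 - a^2 - 3*a + 2) * hq
  · linear_combination (a^4 - a^3 - 4*a^2 + 3*a + 2) * hq
  · linear_combination (a^2 - a - 2) * hq
  · linear_combination (a^3 - a^2 - 3*a + 2) * hq
  · linear_combination (a^3 - a^2 - 3*a + 2) * hq

lemma F2_set_eq :
    {p : ℂ × ℂ | F2Eqns p.1 p.2} =
      ({((2 : ℂ), (2 : ℂ)), ((-1 : ℂ), (1 : ℂ))} ∪
        {p : ℂ × ℂ | p.1 ^ 2 - 3 * p.1 + 1 = 0 ∧ p.2 = 2 * p.1 - 2} ∪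
        {p : ℂ × ℂ | p.1 ^ 2 + p.1 - 1 = 0 ∧ p.2 = 2}) := by
  ext ⟨a, b⟩
  simp only [Set.mem_setOf_eq, Set.mem_union, Set.mem_insert_iff,
    Set.mem_singleton_iff, Prod.mk.injEq]
  constructor
  · intro h
    rcases F2_fwd h with ⟨ha, hb⟩ | ⟨ha, hb⟩ | ⟨hq, hb⟩ | ⟨hq, hb⟩
    · exact Or.inl (Or.inl (Or.inl ⟨ha, hb⟩))
    · exact Or.inl (Or.inl (Or.inr ⟨ha, hb⟩))
    · exact Or.inl (Or.inr ⟨hq, hb⟩)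
    · exact Or.inr ⟨hq, hb⟩
  · rintro (((⟨ha, hb⟩ | ⟨ha, hb⟩) | ⟨hq, hb⟩) | ⟨hq, hb⟩)
    · subst ha; subst hb
      exact ⟨by norm_num, by norm_num, by norm_num, by norm_num, by norm_num⟩
    · subst ha; subst hb
      exact ⟨by norm_num, by norm_num, by norm_num, by norm_num, by norm_num⟩
    · subst hb; exact F2_bwd_q1 hq
    · subst hb; exact F2_bwd_q2 hq

section Count

noncomputable def sq5 : ℂ := ((Real.sqrt 5 : ℝ) : ℂ)

lemma sq5_sq : sq5 ^ 2 = 5 := by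
  rw [sq5, ← Complex.ofReal_pow, Real.sq_sqrt (by norm_num : (0:ℝ) ≤ 5)]
  norm_num

lemma sq5_ne (c : ℂ) (hc : c ^ 2 ≠ 5) : sq5 ≠ c := by
  intro h
  exact hc (h ▸ sq5_sq)

lemma quad1_eq : {p : ℂ × ℂ | p.1 ^ 2 - 3 * p.1 + 1 = 0 ∧ p.2 = 2 * p.1 - 2} =
    {(((3 + sq5)/2 : ℂ), (1 + sq5 : ℂ)), (((3 - sq5)/2 : ℂ), (1 - sq5 : ℂ))} := by
  have hs := sq5_sq
  ext ⟨a, b⟩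
  simp only [Set.mem_setOf_eq, Set.mem_insert_iff, Set.mem_singleton_iff, Prod.mk.injEq]
  constructor
  · rintro ⟨hq, hb⟩
    have hfac : (a - (3 + sq5)/2) * (a - (3 - sq5)/2) = 0 := by
      linear_combination hq - (1/4 : ℂ) * hs
    rcases mul_eq_zero.mp hfac with h | h
    · exact Or.inl ⟨by linear_combination h, by linear_combination hb + 2 * h⟩
    · exact Or.inr ⟨by linear_combination h, by linear_combination hb + 2 * h⟩
  · rintro (⟨ha, hb⟩ | ⟨ha, hb⟩) <;> subst ha <;> subst hb <;>
      exact ⟨by linear_combination (1/4 : ℂ) * hs, by ring⟩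

lemma quad2_eq : {p : ℂ × ℂ | p.1 ^ 2 + p.1 - 1 = 0 ∧ p.2 = 2} =
    {(((-1 + sq5)/2 : ℂ), (2 : ℂ)), (((-1 - sq5)/2 : ℂ), (2 : ℂ))} := by
  have hs := sq5_sq
  ext ⟨a, b⟩
  simp only [Set.mem_setOf_eq, Set.mem_insert_iff, Set.mem_singleton_iff, Prod.mk.injEq]
  constructor
  · rintro ⟨hq, hb⟩
    have hfac : (a - (-1 + sq5)/2) * (a - (-1 - sq5)/2) = 0 := by
      linear_combination hq - (1/4 : ℂ) * hs
    rcases mul_eq_zero.mp hfac with h | h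
    · exact Or.inl ⟨by linear_combination h, hb⟩
    · exact Or.inr ⟨by linear_combination h, hb⟩
  · rintro (⟨ha, hb⟩ | ⟨ha, hb⟩) <;> subst ha <;> subst hb <;>
      exact ⟨by linear_combination (1/4 : ℂ) * hs, rfl⟩

lemma six_card :
    ({((2 : ℂ), (2 : ℂ)), ((-1 : ℂ), (1 : ℂ))} ∪
        {p : ℂ × ℂ | p.1 ^ 2 - 3 * p.1 + 1 = 0 ∧ p.2 = 2 * p.1 - 2} ∪
        {p : ℂ × ℂ | p.1 ^ 2 + p.1 - 1 = 0 ∧ p.2 = 2}).ncard = 6 := by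
  have hs := sq5_sq
  rw [quad1_eq, quad2_eq]
  have hU : ({((2 : ℂ), (2 : ℂ)), ((-1 : ℂ), (1 : ℂ))} ∪
      {(((3 + sq5)/2 : ℂ), (1 + sq5 : ℂ)), (((3 - sq5)/2 : ℂ), (1 - sq5 : ℂ))} ∪
      {(((-1 + sq5)/2 : ℂ), (2 : ℂ)), (((-1 - sq5)/2 : ℂ), (2 : ℂ))}) =
      ({((2 : ℂ), (2 : ℂ)), ((-1 : ℂ), (1 : ℂ)),
        (((3 + sq5)/2 : ℂ), (1 + sq5 : ℂ)), (((3 - sq5)/2 : ℂ), (1 - sq5 : ℂ)),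
        (((-1 + sq5)/2 : ℂ), (2 : ℂ)), (((-1 - sq5)/2 : ℂ), (2 : ℂ))} : Set (ℂ × ℂ)) := by
    ext x
    simp only [Set.mem_union, Set.mem_insert_iff, Set.mem_singleton_iff]
    tauto
  rw [hU]
  have e1 : sq5 ≠ 1 := sq5_ne 1 (by norm_num)
  have em1 : sq5 ≠ -1 := sq5_ne (-1) (by norm_num)
  have e0 : sq5 ≠ 0 := sq5_ne 0 (by norm_num)
  have e5 : sq5 ≠ 5 := sq5_ne 5 (by norm_num)
  have em5 : sq5 ≠ -5 := sq5_ne (-5) (by norm_num)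
  have n1 : ((2 : ℂ), (2 : ℂ)) ∉ ({((-1 : ℂ), (1 : ℂ)),
        (((3 + sq5)/2 : ℂ), (1 + sq5 : ℂ)), (((3 - sq5)/2 : ℂ), (1 - sq5 : ℂ)),
        (((-1 + sq5)/2 : ℂ), (2 : ℂ)), (((-1 - sq5)/2 : ℂ), (2 : ℂ))} : Set (ℂ × ℂ)) := by
    simp only [Set.mem_insert_iff, Set.mem_singleton_iff, Prod.mk.injEq, not_or]
    refine ⟨fun h => by norm_num at h,
      fun h => e1 (by linear_combination -h.2),
      fun h => em1 (by linear_combination h.2),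
      fun h => e5 (by linear_combination -2 * h.1),
      fun h => em5 (by linear_combination 2 * h.1)⟩
  have n2 : ((-1 : ℂ), (1 : ℂ)) ∉ ({
        (((3 + sq5)/2 : ℂ), (1 + sq5 : ℂ)), (((3 - sq5)/2 : ℂ), (1 - sq5 : ℂ)),
        (((-1 + sq5)/2 : ℂ), (2 : ℂ)), (((-1 - sq5)/2 : ℂ), (2 : ℂ))} : Set (ℂ × ℂ)) := by
    simp only [Set.mem_insert_iff, Set.mem_singleton_iff, Prod.mk.injEq, not_or]
    refine ⟨fun h => e0 (by linear_combination -h.2),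
      fun h => e0 (by linear_combination h.2),
      fun h => em1 (by linear_combination -2 * h.1),
      fun h => e1 (by linear_combination 2 * h.1)⟩
  have n3 : (((3 + sq5)/2 : ℂ), (1 + sq5 : ℂ)) ∉ ({
        (((3 - sq5)/2 : ℂ), (1 - sq5 : ℂ)),
        (((-1 + sq5)/2 : ℂ), (2 : ℂ)), (((-1 - sq5)/2 : ℂ), (2 : ℂ))} : Set (ℂ × ℂ)) := by
    simp only [Set.mem_insert_iff, Set.mem_singleton_iff, Prod.mk.injEq, not_or]
    refine ⟨fun h => e0 (by linear_combination (1/2 : ℂ) * h.2),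
      fun h => e1 (by linear_combination h.2),
      fun h => e1 (by linear_combination h.2)⟩
  have n4 : (((3 - sq5)/2 : ℂ), (1 - sq5 : ℂ)) ∉ ({
        (((-1 + sq5)/2 : ℂ), (2 : ℂ)), (((-1 - sq5)/2 : ℂ), (2 : ℂ))} : Set (ℂ × ℂ)) := by
    simp only [Set.mem_insert_iff, Set.mem_singleton_iff, Prod.mk.injEq, not_or]
    refine ⟨fun h => em1 (by linear_combination -h.2),
      fun h => em1 (by linear_combination -h.2)⟩
  have n5 : (((-1 + sq5)/2 : ℂ), (2 : ℂ)) ∉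
      ({(((-1 - sq5)/2 : ℂ), (2 : ℂ))} : Set (ℂ × ℂ)) := by
    simp only [Set.mem_singleton_iff, Prod.mk.injEq, not_and]
    intro h
    exact (e0 (by linear_combination h)).elim
  rw [Set.ncard_insert_of_notMem n1 (Set.toFinite _),
    Set.ncard_insert_of_notMem n2 (Set.toFinite _),
    Set.ncard_insert_of_notMem n3 (Set.toFinite _),
    Set.ncard_insert_of_notMem n4 (Set.toFinite _),
    Set.ncard_insert_of_notMem n5 (Set.toFinite _),
    Set.ncard_singleton]

end Count

theorem stmt3 :
    {p : ℂ × ℂ | F2Eqns p.1 p.2} =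
      ({((2 : ℂ), (2 : ℂ)), ((-1 : ℂ), (1 : ℂ))} ∪
        {p : ℂ × ℂ | p.1 ^ 2 - 3 * p.1 + 1 = 0 ∧ p.2 = 2 * p.1 - 2} ∪
        {p : ℂ × ℂ | p.1 ^ 2 + p.1 - 1 = 0 ∧ p.2 = 2}) ∧
    {p : ℂ × ℂ | F2Eqns p.1 p.2}.ncard = 6 := by
  refine ⟨F2_set_eq, ?_⟩
  rw [F2_set_eq]
  exact six_card
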